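/- arXiv:1301.4195 — 2 statements merged into one kernel-verified Lean document; each statement's English description precedes it below -/
import Mathlib

section
/- Let d ≥ 1, let f : ℝ^d → ℂ be a Schwartz function, let ζ ∈ ℝ^d, and let G(·, ζ) : ℝ^d → ℂ be integrable. Define the Fourier transform f̂(ξ) = (2π)^{−d/2} ∫_{ℝ^d} f(v) e^{−i ξ·v} dv and Ĝ(ξ, ζ) = (2π)^{−d/2} ∫_{ℝ^d} G(u, ζ) e^{−i ξ·u} du. Then ∫_{ℝ^d} G(u, ζ) · [ (2π)^{−d/2} ∫_{ℝ^d} f(v) f(v − u) e^{−i ζ·v} dv ] du = ∫_{ℝ^d} Ĝ(ξ, ζ) f̂(ζ − ξ) f̂(ξ) dξ; that is, the weighted integral against the Fourier transform of v ↦ f(v) f(v − u) equals a weighted convolution of f̂ with itself against the weight Ĝ. -/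
open MeasureTheory
open scoped RealInnerProductSpace
open Real
open scoped FourierTransform


variable {d : ℕ}

lemma translation (h : EuclideanSpace ℝ (Fin d) → ℂ) (ξ : EuclideanSpace ℝ (Fin d)) :
    ∫ v : EuclideanSpace ℝ (Fin d), h v * Complex.exp (-Complex.I * ((⟪ξ, v⟫ : ℝ) : ℂ))
      = 𝓕 h ((2 * Real.pi)⁻¹ • ξ) := by
  rw [Real.fourier_eq']
  congr 1
  ext v
  rw [smul_eq_mul, mul_comm]
  congr 1
  have h2π : (2 * Real.pi) ≠ 0 := by positivity
  have hr : (-2 * Real.pi * ⟪v, (2 * Real.pi)⁻¹ • ξ⟫ : ℝ) = -⟪ξ, v⟫ := by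
    rw [real_inner_smul_right, real_inner_comm v ξ]
    field_simp
  rw [hr]
  push_cast
  ring

local notation "V" => EuclideanSpace ℝ (Fin d)

lemma main_step (f : SchwartzMap (EuclideanSpace ℝ (Fin d)) ℂ) (ζ' : V)
    (G : V → ℂ) (hG : Integrable G) :
    ∫ u : V, G u * 𝓕 (fun v => f v * f (v - u)) ζ'
      = ∫ η : V, 𝓕 G η * 𝓕 (⇑f) (ζ' - η) * 𝓕 (⇑f) η := by
  set g : SchwartzMap (EuclideanSpace ℝ (Fin d)) ℂ := SchwartzMap.fourierTransformCLM ℂ f with hg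
  have hgco : ⇑g = 𝓕 ⇑f := rfl
  have hginv : ∀ x : V, f x = ∫ η : V, Complex.exp (↑(2 * π * ⟪η, x⟫) * Complex.I) * g η := by
    intro x
    have := Continuous.fourierInv_fourier_eq f.continuous f.integrable (hgco ▸ g.integrable)
    conv_lhs => rw [← this]
    rw [Real.fourierInv_eq', ← hgco]
    simp_rw [smul_eq_mul]
  -- Step B
  have stepB : ∀ u : V, 𝓕 (fun v => f v * f (v - u)) ζ'
      = ∫ η : V, g η * Complex.exp (↑(-2 * π * ⟪η, u⟫) * Complex.I) * 𝓕 (⇑f) (ζ' - η) := by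
    intro u
    rw [Real.fourier_eq']
    have key : ∀ v : V, Complex.exp (↑(-2 * π * ⟪v, ζ'⟫) * Complex.I) • (f v * f (v - u))
        = ∫ η : V, g η * Complex.exp (↑(-2 * π * ⟪η, u⟫) * Complex.I) *
            (Complex.exp (↑(-2 * π * ⟪v, ζ' - η⟫) * Complex.I) * f v) := by
      intro v
      rw [smul_eq_mul, hginv (v - u), ← mul_assoc, ← integral_const_mul]
      congr 1
      ext η
      have e1 : Complex.exp (↑(-2 * π * ⟪v, ζ'⟫) * Complex.I) * f v *
          (Complex.exp (↑(2 * π * ⟪η, v - u⟫) * Complex.I) * g η)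
          = Complex.exp ((↑(-2 * π * ⟪v, ζ'⟫) + ↑(2 * π * ⟪η, v - u⟫)) * Complex.I) * (f v * g η) := by
        rw [add_mul, Complex.exp_add]; ring
      have e2 : g η * Complex.exp (↑(-2 * π * ⟪η, u⟫) * Complex.I) *
          (Complex.exp (↑(-2 * π * ⟪v, ζ' - η⟫) * Complex.I) * f v)
          = Complex.exp ((↑(-2 * π * ⟪η, u⟫) + ↑(-2 * π * ⟪v, ζ' - η⟫)) * Complex.I) * (f v * g η) := by
        rw [add_mul, Complex.exp_add]; ring
      rw [e1, e2, ← Complex.ofReal_add, ← Complex.ofReal_add]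
      have hr : (-2 * π * ⟪v, ζ'⟫ + 2 * π * ⟪η, v - u⟫ : ℝ)
          = (-2 * π * ⟪η, u⟫ + -2 * π * ⟪v, ζ' - η⟫) := by
        rw [inner_sub_right, inner_sub_right, real_inner_comm η v]; ring
      rw [hr]
    simp_rw [key]
    have hint : Integrable (Function.uncurry fun (v η : V) =>
        g η * Complex.exp (↑(-2 * π * ⟪η, u⟫) * Complex.I) *
          (Complex.exp (↑(-2 * π * ⟪v, ζ' - η⟫) * Complex.I) * f v)) (volume.prod volume) := by
      apply Integrable.mono' (f.integrable.norm.mul_prod g.integrable.norm)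
      · apply Continuous.aestronglyMeasurable
        apply Continuous.mul
        · apply Continuous.mul
          · exact g.continuous.comp continuous_snd
          · exact Complex.continuous_exp.comp
              ((Complex.continuous_ofReal.comp (((continuous_const.mul continuous_const).mul
                ((continuous_snd.inner continuous_const))))).mul continuous_const)
        · exact (Complex.continuous_exp.comp
            ((Complex.continuous_ofReal.comp ((continuous_const.mul continuous_const).mul
              (continuous_fst.inner (continuous_const.sub continuous_snd)))).mul
                continuous_const)).mul (f.continuous.comp continuous_fst)
      · filter_upwards with p
        simp only [Function.uncurry, norm_mul,
          Complex.norm_exp_ofReal_mul_I, mul_one, one_mul]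
        exact le_of_eq (by ring)
    rw [MeasureTheory.integral_integral_swap hint]
    congr 1
    ext η
    rw [integral_const_mul]
    congr 1
    rw [Real.fourier_eq']
    simp_rw [smul_eq_mul]
  simp_rw [stepB, ← hgco]
  obtain ⟨C, hC0, hC⟩ := g.decay 0 0
  have hCb : ∀ x : EuclideanSpace ℝ (Fin d), ‖g x‖ ≤ C := by
    intro x
    simpa [norm_iteratedFDeriv_zero] using hC x
  have hint2 : Integrable (Function.uncurry fun (u η : V) =>
      G u * (g η * Complex.exp (↑(-2 * π * ⟪η, u⟫) * Complex.I) * g (ζ' - η)))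
      (volume.prod volume) := by
    apply Integrable.mono' (hG.norm.mul_prod (g.integrable.norm.mul_const C))
    · apply AEStronglyMeasurable.mul
      · exact hG.1.comp_quasiMeasurePreserving MeasureTheory.Measure.quasiMeasurePreserving_fst
      · apply Continuous.aestronglyMeasurable
        apply Continuous.mul
        · apply Continuous.mul
          · exact g.continuous.comp continuous_snd
          · exact Complex.continuous_exp.comp
              ((Complex.continuous_ofReal.comp ((continuous_const.mul continuous_const).mul
                (continuous_snd.inner continuous_fst))).mul continuous_const)
        · exact g.continuous.comp (continuous_const.sub continuous_snd)
    · filter_upwards with p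
      simp only [Function.uncurry, norm_mul,
        Complex.norm_exp_ofReal_mul_I, mul_one, one_mul]
      gcongr
      exact hCb (ζ' - p.2)
  simp_rw [← integral_const_mul]
  rw [MeasureTheory.integral_integral_swap hint2]
  congr 1
  ext η
  have hpt : ∀ u : V, G u * (g η * Complex.exp (↑(-2 * π * ⟪η, u⟫) * Complex.I) * g (ζ' - η))
      = (g η * g (ζ' - η)) * (Complex.exp (↑(-2 * π * ⟪u, η⟫) * Complex.I) * G u) := by
    intro u
    rw [real_inner_comm η u]
    ring
  simp_rw [hpt, integral_const_mul]
  rw [Real.fourier_eq']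
  simp_rw [smul_eq_mul]
  ring



/-- The weighted integral of the Fourier transform of `v ↦ f(v) f(v − u)` against `G(·,ζ)`
equals the weighted convolution of `f̂` with itself against the weight `Ĝ`:
`∫ G(u,ζ) F[f(v)f(v−u)](ζ) du = ∫ Ĝ(ξ,ζ) f̂(ζ−ξ) f̂(ξ) dξ`. -/
theorem weighted_convolution_form_of_transformed_collision
    (d : ℕ) (hd : 1 ≤ d)
    (f : SchwartzMap (EuclideanSpace ℝ (Fin d)) ℂ)
    (ζ : EuclideanSpace ℝ (Fin d))
    (G : EuclideanSpace ℝ (Fin d) → ℂ) (hG : Integrable G)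
    (fhat Ghat : EuclideanSpace ℝ (Fin d) → ℂ)
    (hfhat : ∀ ξ : EuclideanSpace ℝ (Fin d),
      fhat ξ = (((2 * Real.pi) ^ (-(d : ℝ) / 2) : ℝ) : ℂ) *
        ∫ v : EuclideanSpace ℝ (Fin d), f v * Complex.exp (-Complex.I * ((⟪ξ, v⟫ : ℝ) : ℂ)))
    (hGhat : ∀ ξ : EuclideanSpace ℝ (Fin d),
      Ghat ξ = (((2 * Real.pi) ^ (-(d : ℝ) / 2) : ℝ) : ℂ) *
        ∫ u : EuclideanSpace ℝ (Fin d), G u * Complex.exp (-Complex.I * ((⟪ξ, u⟫ : ℝ) : ℂ))) :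
    (∫ u : EuclideanSpace ℝ (Fin d),
        G u * ((((2 * Real.pi) ^ (-(d : ℝ) / 2) : ℝ) : ℂ) *
          ∫ v : EuclideanSpace ℝ (Fin d),
            f v * f (v - u) * Complex.exp (-Complex.I * ((⟪ζ, v⟫ : ℝ) : ℂ)))) =
      ∫ ξ : EuclideanSpace ℝ (Fin d), Ghat ξ * fhat (ζ - ξ) * fhat ξ := by
  have h2π : (0:ℝ) < 2 * Real.pi := by positivity
  set c : ℝ := (2 * Real.pi) ^ (-(d : ℝ) / 2) with hc
  have hfhat' : ∀ ξ, fhat ξ = (c:ℂ) * 𝓕 (⇑f) ((2 * Real.pi)⁻¹ • ξ) := by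
    intro ξ; rw [hfhat ξ, translation]
  have hGhat' : ∀ ξ, Ghat ξ = (c:ℂ) * 𝓕 G ((2 * Real.pi)⁻¹ • ξ) := by
    intro ξ; rw [hGhat ξ, translation]
  have hL : (∫ u : EuclideanSpace ℝ (Fin d),
        G u * ((c:ℂ) * ∫ v : EuclideanSpace ℝ (Fin d),
            f v * f (v - u) * Complex.exp (-Complex.I * ((⟪ζ, v⟫ : ℝ) : ℂ))))
      = (c:ℂ) * ∫ u : EuclideanSpace ℝ (Fin d),
          G u * 𝓕 (fun v => f v * f (v - u)) ((2 * Real.pi)⁻¹ • ζ) := by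
    simp_rw [translation]
    simp_rw [show ∀ (z w : ℂ), z * ((c:ℂ) * w) = (c:ℂ) * (z * w) from fun z w => by ring]
    rw [integral_const_mul]
  rw [hL, main_step f ((2 * Real.pi)⁻¹ • ζ) G hG]
  -- now handle RHS via change of variables
  have hcs := MeasureTheory.Measure.integral_comp_smul volume
    (fun ξ => Ghat ξ * fhat (ζ - ξ) * fhat ξ) (2 * Real.pi)
  rw [finrank_euclideanSpace_fin] at hcs
  have habs : |(((2 * Real.pi) ^ d : ℝ))⁻¹| = (((2 * Real.pi) ^ d : ℝ))⁻¹ := by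
    rw [abs_of_pos]; positivity
  rw [habs] at hcs
  have hsolve : (∫ ξ : EuclideanSpace ℝ (Fin d), Ghat ξ * fhat (ζ - ξ) * fhat ξ)
      = ((2 * Real.pi) ^ d : ℝ) • ∫ η : EuclideanSpace ℝ (Fin d),
          Ghat ((2 * Real.pi) • η) * fhat (ζ - (2 * Real.pi) • η) * fhat ((2 * Real.pi) • η) := by
    rw [hcs, smul_smul, mul_inv_cancel₀ (by positivity), one_smul]
  rw [hsolve]
  have h1 : ∀ η : EuclideanSpace ℝ (Fin d), (2 * Real.pi)⁻¹ • ((2 * Real.pi) • η) = η := by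
    intro η; rw [smul_smul, inv_mul_cancel₀ h2π.ne', one_smul]
  have hΦ : ∀ η : EuclideanSpace ℝ (Fin d),
      Ghat ((2 * Real.pi) • η) * fhat (ζ - (2 * Real.pi) • η) * fhat ((2 * Real.pi) • η)
      = (c:ℂ)^3 * (𝓕 G η * 𝓕 (⇑f) ((2 * Real.pi)⁻¹ • ζ - η) * 𝓕 (⇑f) η) := by
    intro η
    rw [hGhat', hfhat', hfhat', h1 η]
    rw [show (2 * Real.pi)⁻¹ • (ζ - (2 * Real.pi) • η) = (2 * Real.pi)⁻¹ • ζ - η by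
      rw [smul_sub, h1 η]]
    ring
  simp_rw [hΦ, integral_const_mul]
  rw [Complex.real_smul]
  rw [show (((2 * Real.pi) ^ d : ℝ) : ℂ) * ((c:ℂ)^3 * ∫ η : EuclideanSpace ℝ (Fin d),
      𝓕 G η * 𝓕 (⇑f) ((2 * Real.pi)⁻¹ • ζ - η) * 𝓕 (⇑f) η)
    = ((((2 * Real.pi) ^ d : ℝ) * c^3 : ℝ) : ℂ) * ∫ η : EuclideanSpace ℝ (Fin d),
      𝓕 G η * 𝓕 (⇑f) ((2 * Real.pi)⁻¹ • ζ - η) * 𝓕 (⇑f) η by push_cast; ring]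
  congr 2
  rw [hc, ← Real.rpow_natCast (2 * Real.pi) d, ← Real.rpow_natCast ((2 * Real.pi) ^ (-(d:ℝ)/2)) 3,
    ← Real.rpow_mul h2π.le, ← Real.rpow_add h2π]
  congr 1
  push_cast
  ring
end

section
/- Let f : ℝ³ → ℂ be a Schwartz function, let b : [−1, 1] → ℝ be a bounded measurable function (the angular cross section), let −3 < λ ≤ 1, and let ζ ∈ ℝ³. With the collision rule v' = v + ½(|u|σ − u) for u = v − v∗ and σ ∈ S², and with cos θ = (u·σ)/|u|, one has (2π)^{−3/2} ∫_{ℝ³} ∫_{ℝ³} ∫_{S²} f(v) f(v∗) |v − v∗|^λ b(cos θ) ( e^{−i ζ·v'} − e^{−i ζ·v} ) dσ dv∗ dv = ∫_{ℝ³} G(u, ζ) · [ (2π)^{−3/2} ∫_{ℝ³} f(v) f(v − u) e^{−i ζ·v} dv ] du, where G(u, ζ) = |u|^λ ∫_{S²} b( (u·σ)/|u| ) ( e^{−i(1/2) |u| ζ·σ} e^{i(1/2) ζ·u} − 1 ) dσ. -/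
open MeasureTheory Metric
open scoped RealInnerProductSpace

set_option maxHeartbeats 1000000
open Set


lemma aux_int_ball {lam : ℝ} (hlam : -3 < lam) :
    Integrable (fun u : EuclideanSpace ℝ (Fin 3) =>
      Set.indicator (Metric.closedBall 0 1) (fun u => ‖u‖ ^ lam) u) := by
  set E := EuclideanSpace ℝ (Fin 3)
  set F : ℝ → ℝ := Set.indicator (Set.Ioc 0 1) (fun r => r ^ lam) with hF
  -- Step 1 : integrability on (0,∞) with density r^2
  have h1 : Integrable (fun y : Set.Ioi (0:ℝ) => F y.1) (Measure.volumeIoiPow 2) := by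
    rw [Measure.volumeIoiPow, integrable_withDensity_iff]
    · have hemb : MeasurableEmbedding ((↑) : Set.Ioi (0:ℝ) → ℝ) :=
        MeasurableEmbedding.subtype_coe measurableSet_Ioi
      have key : Integrable ((fun r : ℝ => F r * (ENNReal.ofReal (r ^ 2)).toReal) ∘ (↑))
          ((volume : Measure ℝ).comap (↑) : Measure (Set.Ioi (0:ℝ))) := by
        rw [← hemb.integrable_map_iff, hemb.map_comap]
        have hrange : Set.range ((↑) : Set.Ioi (0:ℝ) → ℝ) = Set.Ioi 0 := Subtype.range_coe
        rw [hrange]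
        have hfun : (fun r : ℝ => F r * (ENNReal.ofReal (r ^ 2)).toReal)
            = Set.indicator (Set.Ioc 0 1) (fun r : ℝ => F r * (ENNReal.ofReal (r ^ 2)).toReal) := by
          funext r
          by_cases hr : r ∈ Set.Ioc (0:ℝ) 1
          · rw [Set.indicator_of_mem hr]
          · rw [Set.indicator_of_notMem hr, hF, Set.indicator_of_notMem hr, zero_mul]
        rw [hfun]
        apply Integrable.integrableOn
        rw [integrable_indicator_iff measurableSet_Ioc]
        have base : IntegrableOn (fun r : ℝ => r ^ (lam + 2)) (Set.Ioc 0 1) volume := by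
          rw [← intervalIntegrable_iff_integrableOn_Ioc_of_le zero_le_one]
          exact intervalIntegral.intervalIntegrable_rpow' (by linarith)
        refine base.congr_fun (fun r hr => ?_) measurableSet_Ioc
        have hr0 : (0:ℝ) < r := hr.1
        rw [hF, Set.indicator_of_mem hr, ENNReal.toReal_ofReal (by positivity)]
        show r ^ (lam + 2) = _
        rw [Real.rpow_add hr0]
        norm_num [Real.rpow_natCast]
      exact key
    · exact (measurable_subtype_coe.pow_const 2).ennreal_ofReal
    · exact Filter.Eventually.of_forall fun y => ENNReal.ofReal_lt_top
  -- Step 2: on product sphere × Ioi 0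
  have h2 : Integrable (fun p : sphere (0:E) 1 × Set.Ioi (0:ℝ) => F p.2.1)
      (((volume : Measure E).toSphere).prod (Measure.volumeIoiPow 2)) := by
    have := (integrable_const (1:ℝ) (μ := (volume : Measure E).toSphere)).mul_prod h1
    simpa using this
  -- Step 3: pull back via homeomorphUnitSphereProd
  have hdim : Module.finrank ℝ E - 1 = 2 := by simp [E]
  rw [← hdim] at h2
  have h3 := ((volume : Measure E).measurePreserving_homeomorphUnitSphereProd).integrable_comp_emb
      (Homeomorph.measurableEmbedding _) |>.2 h2
  -- h3 : Integrable ((fun p => F p.2.1) ∘ homeomorphUnitSphereProd E) (volume.comap coe)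
  have h4 : Integrable (fun x : ({0}ᶜ : Set E) => F ‖x.1‖) ((volume : Measure E).comap (↑)) := by
    refine h3.congr ?_
    refine Filter.Eventually.of_forall fun x => ?_
    simp
  -- Step 4: to IntegrableOn  {0}ᶜ
  have hemb : MeasurableEmbedding ((↑) : ({0}ᶜ : Set E) → E) :=
    MeasurableEmbedding.subtype_coe (measurableSet_singleton _).compl
  have h5 : Integrable ((fun u : E => F ‖u‖) ∘ (↑)) ((volume : Measure E).comap (↑) :
      Measure ({0}ᶜ : Set E)) := h4
  rw [← hemb.integrable_map_iff, hemb.map_comap, Subtype.range_coe] at h5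
  have h6 : Integrable (fun u : E => F ‖u‖) := by
    rwa [MeasureTheory.restrict_compl_singleton] at h5
  -- Step 5: compare
  refine h6.congr ?_
  have : ∀ u : E, u ≠ 0 →
      F ‖u‖ = Set.indicator (Metric.closedBall 0 1) (fun u : E => ‖u‖ ^ lam) u := by
    intro u hu
    have h0 : 0 < ‖u‖ := norm_pos_iff.2 hu
    by_cases h1 : ‖u‖ ≤ 1
    · rw [hF, Set.indicator_of_mem (Set.mem_Ioc.2 ⟨h0, h1⟩),
        Set.indicator_of_mem (by simpa [Metric.mem_closedBall, dist_zero_right] using h1)]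
    · rw [hF, Set.indicator_of_notMem (fun h => h1 (Set.mem_Ioc.1 h).2),
        Set.indicator_of_notMem (by simpa [Metric.mem_closedBall, dist_zero_right] using h1)]
  have hnull : (({0} : Set E) : Set E) ∈ {s : Set E | volume s = 0} := measure_singleton 0
  have hmem : ({0}ᶜ : Set E) ∈ ae (volume : Measure E) :=
    compl_mem_ae_iff.2 (measure_singleton 0)
  exact Filter.eventuallyEq_of_mem hmem (fun u hu => this u hu)


-- argument of b lies in [-1,1]
lemma aux_arg_mem (u : EuclideanSpace ℝ (Fin 3)) (σ : sphere (0 : EuclideanSpace ℝ (Fin 3)) 1) :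
    ⟪u, (σ : EuclideanSpace ℝ (Fin 3))⟫ / ‖u‖ ∈ Set.Icc (-1 : ℝ) 1 := by
  rcases eq_or_ne u 0 with rfl | hu
  · simp
  · have hσ : ‖(σ : EuclideanSpace ℝ (Fin 3))‖ = 1 :=
      mem_sphere_zero_iff_norm.1 σ.2
    have h2 : |⟪u, (σ : EuclideanSpace ℝ (Fin 3))⟫| ≤ ‖u‖ := by
      simpa [hσ] using abs_real_inner_le_norm u (σ : EuclideanSpace ℝ (Fin 3))
    have h0 : (0:ℝ) < ‖u‖ := norm_pos_iff.2 hu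
    rw [Set.mem_Icc, ← abs_le, abs_div, abs_of_pos h0, div_le_one h0]
    exact h2

lemma aux_exp_norm (r : ℝ) (s : ℂ) (hs : s = Complex.I ∨ s = -Complex.I) :
    ‖Complex.exp (s * (r : ℂ))‖ = 1 := by
  rcases hs with rfl | rfl <;>
    simp [Complex.norm_exp]

lemma aux_G_bound
    (b : ℝ → ℝ) {Cb : ℝ} (hb : ∀ x ∈ Set.Icc (-1 : ℝ) 1, |b x| ≤ Cb)
    (lam : ℝ) (ζ : EuclideanSpace ℝ (Fin 3))
    (G : EuclideanSpace ℝ (Fin 3) → EuclideanSpace ℝ (Fin 3) → ℂ)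
    (hG : ∀ u ζ' : EuclideanSpace ℝ (Fin 3),
      G u ζ' = ((‖u‖ ^ lam : ℝ) : ℂ) *
        ∫ σ : sphere (0 : EuclideanSpace ℝ (Fin 3)) 1,
          ((b (⟪u, (σ : EuclideanSpace ℝ (Fin 3))⟫ / ‖u‖) : ℝ) : ℂ) *
            (Complex.exp (-Complex.I *
                (((1 / 2) * ‖u‖ * ⟪ζ', (σ : EuclideanSpace ℝ (Fin 3))⟫ : ℝ) : ℂ)) *
              Complex.exp (Complex.I * (((1 / 2) * ⟪ζ', u⟫ : ℝ) : ℂ)) - 1)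
          ∂((volume : Measure (EuclideanSpace ℝ (Fin 3))).toSphere)) (u : EuclideanSpace ℝ (Fin 3)) :
    ‖G u ζ‖ ≤ ((2 * Cb) *
        (((volume : Measure (EuclideanSpace ℝ (Fin 3))).toSphere Set.univ).toReal)) * ‖u‖ ^ lam := by
  have hCb : 0 ≤ Cb := (abs_nonneg _).trans (hb 0 (by norm_num))
  rw [hG]
  rw [norm_mul]
  have h1 : ‖((‖u‖ ^ lam : ℝ) : ℂ)‖ = ‖u‖ ^ lam := by
    rw [Complex.norm_real, Real.norm_eq_abs, abs_of_nonneg (Real.rpow_nonneg (norm_nonneg _) _)]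
  rw [h1]
  rw [mul_comm]
  refine mul_le_mul_of_nonneg_right ?_ (Real.rpow_nonneg (norm_nonneg _) _)
  refine norm_integral_le_of_norm_le_const ?_
  refine Filter.Eventually.of_forall fun σ => ?_
  rw [norm_mul]
  have hbσ : ‖((b (⟪u, (σ : EuclideanSpace ℝ (Fin 3))⟫ / ‖u‖) : ℝ) : ℂ)‖ ≤ Cb := by
    rw [Complex.norm_real, Real.norm_eq_abs]
    exact hb _ (aux_arg_mem u σ)
  have h2 : ‖Complex.exp (-Complex.I *
        (((1 / 2) * ‖u‖ * ⟪ζ, (σ : EuclideanSpace ℝ (Fin 3))⟫ : ℝ) : ℂ)) *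
      Complex.exp (Complex.I * (((1 / 2) * ⟪ζ, u⟫ : ℝ) : ℂ)) - 1‖ ≤ 2 := by
    refine (norm_sub_le _ _).trans ?_
    rw [norm_mul, aux_exp_norm _ _ (Or.inr rfl), aux_exp_norm _ _ (Or.inl rfl)]
    norm_num
  have := mul_le_mul hbσ h2 (norm_nonneg _) hCb
  linarith

lemma aux_G_meas
    (b : ℝ → ℝ) (hb_meas : Measurable b)
    (lam : ℝ) (ζ : EuclideanSpace ℝ (Fin 3))
    (G : EuclideanSpace ℝ (Fin 3) → EuclideanSpace ℝ (Fin 3) → ℂ)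
    (hG : ∀ u ζ' : EuclideanSpace ℝ (Fin 3),
      G u ζ' = ((‖u‖ ^ lam : ℝ) : ℂ) *
        ∫ σ : sphere (0 : EuclideanSpace ℝ (Fin 3)) 1,
          ((b (⟪u, (σ : EuclideanSpace ℝ (Fin 3))⟫ / ‖u‖) : ℝ) : ℂ) *
            (Complex.exp (-Complex.I *
                (((1 / 2) * ‖u‖ * ⟪ζ', (σ : EuclideanSpace ℝ (Fin 3))⟫ : ℝ) : ℂ)) *
              Complex.exp (Complex.I * (((1 / 2) * ⟪ζ', u⟫ : ℝ) : ℂ)) - 1)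
          ∂((volume : Measure (EuclideanSpace ℝ (Fin 3))).toSphere)) :
    StronglyMeasurable (fun u => G u ζ) := by
  have hfun : (fun u => G u ζ) = fun u => ((‖u‖ ^ lam : ℝ) : ℂ) *
        ∫ σ : sphere (0 : EuclideanSpace ℝ (Fin 3)) 1,
          ((b (⟪u, (σ : EuclideanSpace ℝ (Fin 3))⟫ / ‖u‖) : ℝ) : ℂ) *
            (Complex.exp (-Complex.I *
                (((1 / 2) * ‖u‖ * ⟪ζ, (σ : EuclideanSpace ℝ (Fin 3))⟫ : ℝ) : ℂ)) *
              Complex.exp (Complex.I * (((1 / 2) * ⟪ζ, u⟫ : ℝ) : ℂ)) - 1)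
          ∂((volume : Measure (EuclideanSpace ℝ (Fin 3))).toSphere) := funext fun u => hG u ζ
  rw [hfun]
  have h1 : Measurable (fun u : EuclideanSpace ℝ (Fin 3) => ((‖u‖ ^ lam : ℝ) : ℂ)) :=
    Complex.measurable_ofReal.comp (measurable_norm.pow_const lam)
  refine (h1.stronglyMeasurable.mul ?_)
  -- strongly measurable integral
  have hker : StronglyMeasurable (fun p : EuclideanSpace ℝ (Fin 3) ×
      sphere (0 : EuclideanSpace ℝ (Fin 3)) 1 =>
      ((b (⟪p.1, (p.2 : EuclideanSpace ℝ (Fin 3))⟫ / ‖p.1‖) : ℝ) : ℂ) *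
        (Complex.exp (-Complex.I *
            (((1 / 2) * ‖p.1‖ * ⟪ζ, (p.2 : EuclideanSpace ℝ (Fin 3))⟫ : ℝ) : ℂ)) *
          Complex.exp (Complex.I * (((1 / 2) * ⟪ζ, p.1⟫ : ℝ) : ℂ)) - 1)) := by
    have hinner : Continuous (fun p : EuclideanSpace ℝ (Fin 3) ×
        sphere (0 : EuclideanSpace ℝ (Fin 3)) 1 => ⟪p.1, (p.2 : EuclideanSpace ℝ (Fin 3))⟫) :=
      continuous_fst.inner (continuous_subtype_val.comp continuous_snd)
    have hargm : Measurable (fun p : EuclideanSpace ℝ (Fin 3) ×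
        sphere (0 : EuclideanSpace ℝ (Fin 3)) 1 =>
        ⟪p.1, (p.2 : EuclideanSpace ℝ (Fin 3))⟫ / ‖p.1‖) :=
      hinner.measurable.div (measurable_norm.comp measurable_fst)
    have hbm : Measurable (fun p : EuclideanSpace ℝ (Fin 3) ×
        sphere (0 : EuclideanSpace ℝ (Fin 3)) 1 =>
        ((b (⟪p.1, (p.2 : EuclideanSpace ℝ (Fin 3))⟫ / ‖p.1‖) : ℝ) : ℂ)) :=
      Complex.measurable_ofReal.comp (hb_meas.comp hargm)
    have hexp1 : Continuous (fun p : EuclideanSpace ℝ (Fin 3) ×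
        sphere (0 : EuclideanSpace ℝ (Fin 3)) 1 =>
        Complex.exp (-Complex.I *
          (((1 / 2) * ‖p.1‖ * ⟪ζ, (p.2 : EuclideanSpace ℝ (Fin 3))⟫ : ℝ) : ℂ))) := by
      refine Complex.continuous_exp.comp (continuous_const.mul ?_)
      exact Complex.continuous_ofReal.comp
        ((continuous_const.mul (continuous_norm.comp continuous_fst)).mul
          (continuous_const.inner (continuous_subtype_val.comp continuous_snd)))
    have hexp2 : Continuous (fun p : EuclideanSpace ℝ (Fin 3) ×
        sphere (0 : EuclideanSpace ℝ (Fin 3)) 1 =>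
        Complex.exp (Complex.I * (((1 / 2) * ⟪ζ, p.1⟫ : ℝ) : ℂ))) := by
      refine Complex.continuous_exp.comp (continuous_const.mul ?_)
      exact Complex.continuous_ofReal.comp
        (continuous_const.mul (continuous_const.inner continuous_fst))
    exact (hbm.mul ((hexp1.measurable.mul hexp2.measurable).sub measurable_const)).stronglyMeasurable
  exact hker.integral_prod_right'

lemma aux_prod_integrable
    (f : SchwartzMap (EuclideanSpace ℝ (Fin 3)) ℂ)
    (b : ℝ → ℝ) (hb_meas : Measurable b)
    {Cb : ℝ} (hb : ∀ x ∈ Set.Icc (-1 : ℝ) 1, |b x| ≤ Cb)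
    {lam : ℝ} (hlam₁ : -3 < lam) (hlam₂ : lam ≤ 1)
    (ζ : EuclideanSpace ℝ (Fin 3))
    (G : EuclideanSpace ℝ (Fin 3) → EuclideanSpace ℝ (Fin 3) → ℂ)
    (hG : ∀ u ζ' : EuclideanSpace ℝ (Fin 3),
      G u ζ' = ((‖u‖ ^ lam : ℝ) : ℂ) *
        ∫ σ : sphere (0 : EuclideanSpace ℝ (Fin 3)) 1,
          ((b (⟪u, (σ : EuclideanSpace ℝ (Fin 3))⟫ / ‖u‖) : ℝ) : ℂ) *
            (Complex.exp (-Complex.I *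
                (((1 / 2) * ‖u‖ * ⟪ζ', (σ : EuclideanSpace ℝ (Fin 3))⟫ : ℝ) : ℂ)) *
              Complex.exp (Complex.I * (((1 / 2) * ⟪ζ', u⟫ : ℝ) : ℂ)) - 1)
          ∂((volume : Measure (EuclideanSpace ℝ (Fin 3))).toSphere)) :
    Integrable (fun p : (EuclideanSpace ℝ (Fin 3)) × (EuclideanSpace ℝ (Fin 3)) =>
      f p.1 * f (p.1 - p.2) * Complex.exp (-Complex.I * ((⟪ζ, p.1⟫ : ℝ) : ℂ)) * G p.2 ζ)
      ((volume : Measure (EuclideanSpace ℝ (Fin 3))).prod volume) := by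
  have hCS : ∀ x : EuclideanSpace ℝ (Fin 3), True := fun _ => trivial
  clear hCS
  set K : ℝ := (2 * Cb) * (((volume : Measure (EuclideanSpace ℝ (Fin 3))).toSphere Set.univ).toReal) with hK
  have hCb : 0 ≤ Cb := (abs_nonneg _).trans (hb 0 (by norm_num))
  have hKpos : 0 ≤ K := by positivity
  set g : EuclideanSpace ℝ (Fin 3) → ℝ := fun x => (1 + ‖x‖) * ‖f x‖ with hg
  have hg_nonneg : ∀ x, 0 ≤ g x := fun x => by positivity
  have hg_cont : Continuous g := ((continuous_const.add continuous_norm).mul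
    (f.continuous.norm))
  have hg_int : Integrable g := by
    have h1 : Integrable (fun x : EuclideanSpace ℝ (Fin 3) => ‖x‖ ^ (1:ℕ) * ‖f x‖) := f.integrable_pow_mul volume 1
    have h0 : Integrable (fun x : EuclideanSpace ℝ (Fin 3) => ‖f x‖) := f.integrable.norm
    have : g = fun x => ‖f x‖ + ‖x‖ ^ (1:ℕ) * ‖f x‖ := by
      funext x; simp [hg]; ring
    rw [this]
    exact h0.add h1
  obtain ⟨S, hS⟩ : ∃ S : ℝ, ∀ x, ‖f x‖ ≤ S := by
    obtain ⟨S, hS⟩ := f.decay 0 0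
    exact ⟨S, fun x => by simpa using hS.2 x⟩
  have hS0 : 0 ≤ S := (norm_nonneg _).trans (hS 0)
  set ind : EuclideanSpace ℝ (Fin 3) → ℝ := Set.indicator (Metric.closedBall 0 1) (fun u : EuclideanSpace ℝ (Fin 3) => ‖u‖ ^ lam) with hind
  have hind_nonneg : ∀ u, 0 ≤ ind u :=
    fun u => Set.indicator_nonneg (fun x _ => Real.rpow_nonneg (norm_nonneg _) _) u
  -- the bound
  set B : (EuclideanSpace ℝ (Fin 3)) × (EuclideanSpace ℝ (Fin 3)) → ℝ := fun p => K * ((S * ‖f p.1‖) * ind p.2 + g p.1 * g (p.1 - p.2)) with hB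
  have hB_int : Integrable B ((volume : Measure (EuclideanSpace ℝ (Fin 3))).prod volume) := by
    have hB1 : Integrable (fun p : (EuclideanSpace ℝ (Fin 3)) × (EuclideanSpace ℝ (Fin 3)) => (S * ‖f p.1‖) * ind p.2)
        ((volume : Measure (EuclideanSpace ℝ (Fin 3))).prod volume) :=
      ((f.integrable.norm.const_mul S).mul_prod (aux_int_ball hlam₁))
    have hB2 : Integrable (fun p : (EuclideanSpace ℝ (Fin 3)) × (EuclideanSpace ℝ (Fin 3)) => g p.1 * g (p.1 - p.2))
        ((volume : Measure (EuclideanSpace ℝ (Fin 3))).prod volume) := by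
      have hmeas : AEStronglyMeasurable (fun p : (EuclideanSpace ℝ (Fin 3)) × (EuclideanSpace ℝ (Fin 3)) => g p.1 * g (p.1 - p.2))
          ((volume : Measure (EuclideanSpace ℝ (Fin 3))).prod volume) :=
        ((hg_cont.comp continuous_fst).mul
          (hg_cont.comp (continuous_fst.sub continuous_snd))).aestronglyMeasurable
      rw [integrable_prod_iff hmeas]
      constructor
      · refine Filter.Eventually.of_forall fun v => ?_
        exact (hg_int.comp_sub_left v).const_mul (g v)
      · have : (fun v : EuclideanSpace ℝ (Fin 3) => ∫ u : EuclideanSpace ℝ (Fin 3), ‖g v * g (v - u)‖) = fun v => g v * (∫ x : EuclideanSpace ℝ (Fin 3), g x) := by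
          funext v
          have h1 : ∀ u : EuclideanSpace ℝ (Fin 3), ‖g v * g (v - u)‖ = g v * g (v - u) := fun u =>
            Real.norm_of_nonneg (mul_nonneg (hg_nonneg v) (hg_nonneg _))
          rw [integral_congr_ae (Filter.Eventually.of_forall h1), MeasureTheory.integral_const_mul,
            integral_sub_left_eq_self g volume v]
        rw [this]
        exact hg_int.mul_const _
    exact ((hB1.add hB2).const_mul K)
  refine hB_int.mono' ?_ ?_
  · -- a.e. strong measurability of the integrand
    have h1 : Continuous (fun p : (EuclideanSpace ℝ (Fin 3)) × (EuclideanSpace ℝ (Fin 3)) => f p.1 * f (p.1 - p.2) *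
        Complex.exp (-Complex.I * ((⟪ζ, p.1⟫ : ℝ) : ℂ))) := by
      refine ((f.continuous.comp continuous_fst).mul
        (f.continuous.comp (continuous_fst.sub continuous_snd))).mul ?_
      exact Complex.continuous_exp.comp (continuous_const.mul
        (Complex.continuous_ofReal.comp (continuous_const.inner continuous_fst)))
    exact h1.aestronglyMeasurable.mul
      (((aux_G_meas b hb_meas lam ζ G hG).measurable.comp measurable_snd).aestronglyMeasurable)
  · refine Filter.Eventually.of_forall fun p => ?_
    obtain ⟨v, u⟩ := p
    have hnorm : ‖f v * f (v - u) * Complex.exp (-Complex.I * ((⟪ζ, v⟫ : ℝ) : ℂ)) * G u ζ‖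
        = ‖f v‖ * ‖f (v - u)‖ * ‖G u ζ‖ := by
      rw [norm_mul, norm_mul, norm_mul, aux_exp_norm _ _ (Or.inr rfl), mul_one]
    rw [hnorm]
    have hGb := aux_G_bound b hb lam ζ G hG u
    have hmain : ‖f v‖ * ‖f (v - u)‖ * ‖G u ζ‖ ≤
        K * (‖f v‖ * ‖f (v - u)‖ * ‖u‖ ^ lam) := by
      calc ‖f v‖ * ‖f (v - u)‖ * ‖G u ζ‖
          ≤ ‖f v‖ * ‖f (v - u)‖ * (K * ‖u‖ ^ lam) := by
            refine mul_le_mul_of_nonneg_left hGb (by positivity)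
        _ = K * (‖f v‖ * ‖f (v - u)‖ * ‖u‖ ^ lam) := by ring
    refine hmain.trans ?_
    rw [hB]
    refine mul_le_mul_of_nonneg_left ?_ hKpos
    by_cases hu : ‖u‖ ≤ 1
    · have hind_eq : ind u = ‖u‖ ^ lam := by
        rw [hind, Set.indicator_of_mem (by simpa [Metric.mem_closedBall, dist_zero_right] using hu)]
      have h1 : ‖f v‖ * ‖f (v - u)‖ * ‖u‖ ^ lam ≤ (S * ‖f v‖) * ind u := by
        rw [hind_eq]
        have := mul_le_mul_of_nonneg_left (hS (v - u)) (norm_nonneg (f v))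
        calc ‖f v‖ * ‖f (v - u)‖ * ‖u‖ ^ lam
            ≤ (‖f v‖ * S) * ‖u‖ ^ lam := by
              refine mul_le_mul_of_nonneg_right ?_ (Real.rpow_nonneg (norm_nonneg _) _)
              exact this
          _ = (S * ‖f v‖) * ‖u‖ ^ lam := by ring
      refine h1.trans (le_add_of_nonneg_right (mul_nonneg (hg_nonneg v) (hg_nonneg _)))
    · push_neg at hu
      have h2 : ‖u‖ ^ lam ≤ ‖u‖ := by
        calc ‖u‖ ^ lam ≤ ‖u‖ ^ (1:ℝ) :=
          Real.rpow_le_rpow_of_exponent_le hu.le hlam₂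
          _ = ‖u‖ := Real.rpow_one _
      have h3 : ‖u‖ ≤ (1 + ‖v‖) * (1 + ‖v - u‖) := by
        have : ‖u‖ ≤ ‖v‖ + ‖v - u‖ := by
          have := norm_sub_le v (v - u)
          simpa using this
        nlinarith [norm_nonneg v, norm_nonneg (v - u)]
      have h4 : ‖f v‖ * ‖f (v - u)‖ * ‖u‖ ^ lam ≤ g v * g (v - u) := by
        calc ‖f v‖ * ‖f (v - u)‖ * ‖u‖ ^ lam
            ≤ ‖f v‖ * ‖f (v - u)‖ * ((1 + ‖v‖) * (1 + ‖v - u‖)) := by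
              refine mul_le_mul_of_nonneg_left (h2.trans h3) (by positivity)
          _ = g v * g (v - u) := by rw [hg]; ring
      refine h4.trans (le_add_of_nonneg_left ?_)
      exact mul_nonneg (mul_nonneg hS0 (norm_nonneg _)) (hind_nonneg u)


lemma step_sphere
    (f : SchwartzMap (EuclideanSpace ℝ (Fin 3)) ℂ) (b : ℝ → ℝ) (lam : ℝ)
    (ζ : EuclideanSpace ℝ (Fin 3))
    (G : EuclideanSpace ℝ (Fin 3) → EuclideanSpace ℝ (Fin 3) → ℂ)
    (hG : ∀ u ζ' : EuclideanSpace ℝ (Fin 3),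
      G u ζ' = ((‖u‖ ^ lam : ℝ) : ℂ) *
        ∫ σ : sphere (0 : EuclideanSpace ℝ (Fin 3)) 1,
          ((b (⟪u, (σ : EuclideanSpace ℝ (Fin 3))⟫ / ‖u‖) : ℝ) : ℂ) *
            (Complex.exp (-Complex.I *
                (((1 / 2) * ‖u‖ * ⟪ζ', (σ : EuclideanSpace ℝ (Fin 3))⟫ : ℝ) : ℂ)) *
              Complex.exp (Complex.I * (((1 / 2) * ⟪ζ', u⟫ : ℝ) : ℂ)) - 1)
          ∂((volume : Measure (EuclideanSpace ℝ (Fin 3))).toSphere))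
    (v v_ast : EuclideanSpace ℝ (Fin 3)) :
    (∫ σ : sphere (0 : EuclideanSpace ℝ (Fin 3)) 1,
        f v * f v_ast * ((‖v - v_ast‖ ^ lam : ℝ) : ℂ) *
          ((b (⟪v - v_ast, (σ : EuclideanSpace ℝ (Fin 3))⟫ / ‖v - v_ast‖) : ℝ) : ℂ) *
          (Complex.exp (-Complex.I *
              ((⟪ζ, v + (1 / 2 : ℝ) •
                  (‖v - v_ast‖ • (σ : EuclideanSpace ℝ (Fin 3)) - (v - v_ast))⟫ : ℝ) : ℂ)) -
            Complex.exp (-Complex.I * ((⟪ζ, v⟫ : ℝ) : ℂ)))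
        ∂((volume : Measure (EuclideanSpace ℝ (Fin 3))).toSphere)) =
      f v * f v_ast * Complex.exp (-Complex.I * ((⟪ζ, v⟫ : ℝ) : ℂ)) * G (v - v_ast) ζ := by
  set u := v - v_ast with hu
  have hexp : ∀ σ : sphere (0 : EuclideanSpace ℝ (Fin 3)) 1,
      Complex.exp (-Complex.I * ((⟪ζ, v + (1 / 2 : ℝ) •
          (‖u‖ • (σ : EuclideanSpace ℝ (Fin 3)) - u)⟫ : ℝ) : ℂ)) =
      Complex.exp (-Complex.I * ((⟪ζ, v⟫ : ℝ) : ℂ)) *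
      (Complex.exp (-Complex.I *
          (((1 / 2) * ‖u‖ * ⟪ζ, (σ : EuclideanSpace ℝ (Fin 3))⟫ : ℝ) : ℂ)) *
        Complex.exp (Complex.I * (((1 / 2) * ⟪ζ, u⟫ : ℝ) : ℂ))) := by
    intro σ
    rw [← Complex.exp_add, ← Complex.exp_add]
    congr 1
    have : ⟪ζ, v + (1 / 2 : ℝ) • (‖u‖ • (σ : EuclideanSpace ℝ (Fin 3)) - u)⟫ =
        ⟪ζ, v⟫ + (1/2) * ‖u‖ * ⟪ζ, (σ : EuclideanSpace ℝ (Fin 3))⟫ - (1/2) * ⟪ζ, u⟫ := by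
      rw [inner_add_right, real_inner_smul_right, inner_sub_right, real_inner_smul_right]
      ring
    rw [this]
    push_cast
    ring
  have hint : ∀ σ : sphere (0 : EuclideanSpace ℝ (Fin 3)) 1,
      f v * f v_ast * ((‖u‖ ^ lam : ℝ) : ℂ) *
        ((b (⟪u, (σ : EuclideanSpace ℝ (Fin 3))⟫ / ‖u‖) : ℝ) : ℂ) *
        (Complex.exp (-Complex.I * ((⟪ζ, v + (1 / 2 : ℝ) •
            (‖u‖ • (σ : EuclideanSpace ℝ (Fin 3)) - u)⟫ : ℝ) : ℂ)) -
          Complex.exp (-Complex.I * ((⟪ζ, v⟫ : ℝ) : ℂ))) =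
      (f v * f v_ast * Complex.exp (-Complex.I * ((⟪ζ, v⟫ : ℝ) : ℂ)) * ((‖u‖ ^ lam : ℝ) : ℂ)) *
        (((b (⟪u, (σ : EuclideanSpace ℝ (Fin 3))⟫ / ‖u‖) : ℝ) : ℂ) *
          (Complex.exp (-Complex.I *
              (((1 / 2) * ‖u‖ * ⟪ζ, (σ : EuclideanSpace ℝ (Fin 3))⟫ : ℝ) : ℂ)) *
            Complex.exp (Complex.I * (((1 / 2) * ⟪ζ, u⟫ : ℝ) : ℂ)) - 1)) := by
    intro σ
    rw [hexp σ]
    ring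
  rw [integral_congr_ae (Filter.Eventually.of_forall hint), MeasureTheory.integral_const_mul, hG]
  ring

/-- The Fourier transform of the Boltzmann collision operator (the weak form tested
against `φ(v) = e^{−iζ·v}/(2π)^{3/2}`) equals the weighted integral
`∫ G(u,ζ) F[f(v)f(v−u)](ζ) du`, where `G(u,ζ) = |u|^λ ∫_{S²} b(u·σ/|u|)
(e^{−i(1/2)|u| ζ·σ} e^{i(1/2) ζ·u} − 1) dσ`. -/
theorem fourier_transform_collision_operator
    (f : SchwartzMap (EuclideanSpace ℝ (Fin 3)) ℂ)
    (b : ℝ → ℝ) (hb_meas : Measurable b)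
    (hb_bdd : ∃ Cb : ℝ, ∀ x ∈ Set.Icc (-1 : ℝ) 1, |b x| ≤ Cb)
    (lam : ℝ) (hlam₁ : -3 < lam) (hlam₂ : lam ≤ 1)
    (ζ : EuclideanSpace ℝ (Fin 3))
    (G : EuclideanSpace ℝ (Fin 3) → EuclideanSpace ℝ (Fin 3) → ℂ)
    (hG : ∀ u ζ' : EuclideanSpace ℝ (Fin 3),
      G u ζ' = ((‖u‖ ^ lam : ℝ) : ℂ) *
        ∫ σ : sphere (0 : EuclideanSpace ℝ (Fin 3)) 1,
          ((b (⟪u, (σ : EuclideanSpace ℝ (Fin 3))⟫ / ‖u‖) : ℝ) : ℂ) *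
            (Complex.exp (-Complex.I *
                (((1 / 2) * ‖u‖ * ⟪ζ', (σ : EuclideanSpace ℝ (Fin 3))⟫ : ℝ) : ℂ)) *
              Complex.exp (Complex.I * (((1 / 2) * ⟪ζ', u⟫ : ℝ) : ℂ)) - 1)
          ∂((volume : Measure (EuclideanSpace ℝ (Fin 3))).toSphere)) :
    (((2 * Real.pi) ^ (-(3 : ℝ) / 2) : ℝ) : ℂ) *
        (∫ v : EuclideanSpace ℝ (Fin 3), ∫ v_ast : EuclideanSpace ℝ (Fin 3),
          ∫ σ : sphere (0 : EuclideanSpace ℝ (Fin 3)) 1,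
            f v * f v_ast * ((‖v - v_ast‖ ^ lam : ℝ) : ℂ) *
              ((b (⟪v - v_ast, (σ : EuclideanSpace ℝ (Fin 3))⟫ / ‖v - v_ast‖) : ℝ) : ℂ) *
              (Complex.exp (-Complex.I *
                  ((⟪ζ, v + (1 / 2 : ℝ) •
                      (‖v - v_ast‖ • (σ : EuclideanSpace ℝ (Fin 3)) - (v - v_ast))⟫ : ℝ) : ℂ)) -
                Complex.exp (-Complex.I * ((⟪ζ, v⟫ : ℝ) : ℂ)))
            ∂((volume : Measure (EuclideanSpace ℝ (Fin 3))).toSphere)) =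
      ∫ u : EuclideanSpace ℝ (Fin 3),
        G u ζ * ((((2 * Real.pi) ^ (-(3 : ℝ) / 2) : ℝ) : ℂ) *
          ∫ v : EuclideanSpace ℝ (Fin 3),
            f v * f (v - u) * Complex.exp (-Complex.I * ((⟪ζ, v⟫ : ℝ) : ℂ))) := by
  obtain ⟨Cb, hb⟩ := hb_bdd
  set C : ℂ := (((2 * Real.pi) ^ (-(3 : ℝ) / 2) : ℝ) : ℂ) with hC
  set Φ : EuclideanSpace ℝ (Fin 3) → EuclideanSpace ℝ (Fin 3) → ℂ := fun v u =>
    f v * f (v - u) * Complex.exp (-Complex.I * ((⟪ζ, v⟫ : ℝ) : ℂ)) * G u ζ with hΦ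
  have step1 : ∀ v : EuclideanSpace ℝ (Fin 3),
      (∫ v_ast : EuclideanSpace ℝ (Fin 3),
        ∫ σ : sphere (0 : EuclideanSpace ℝ (Fin 3)) 1,
          f v * f v_ast * ((‖v - v_ast‖ ^ lam : ℝ) : ℂ) *
            ((b (⟪v - v_ast, (σ : EuclideanSpace ℝ (Fin 3))⟫ / ‖v - v_ast‖) : ℝ) : ℂ) *
            (Complex.exp (-Complex.I *
                ((⟪ζ, v + (1 / 2 : ℝ) •
                    (‖v - v_ast‖ • (σ : EuclideanSpace ℝ (Fin 3)) - (v - v_ast))⟫ : ℝ) : ℂ)) -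
              Complex.exp (-Complex.I * ((⟪ζ, v⟫ : ℝ) : ℂ)))
          ∂((volume : Measure (EuclideanSpace ℝ (Fin 3))).toSphere)) =
      ∫ u : EuclideanSpace ℝ (Fin 3), Φ v u := by
    intro v
    have e1 : ∀ v_ast : EuclideanSpace ℝ (Fin 3),
        (∫ σ : sphere (0 : EuclideanSpace ℝ (Fin 3)) 1,
          f v * f v_ast * ((‖v - v_ast‖ ^ lam : ℝ) : ℂ) *
            ((b (⟪v - v_ast, (σ : EuclideanSpace ℝ (Fin 3))⟫ / ‖v - v_ast‖) : ℝ) : ℂ) *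
            (Complex.exp (-Complex.I *
                ((⟪ζ, v + (1 / 2 : ℝ) •
                    (‖v - v_ast‖ • (σ : EuclideanSpace ℝ (Fin 3)) - (v - v_ast))⟫ : ℝ) : ℂ)) -
              Complex.exp (-Complex.I * ((⟪ζ, v⟫ : ℝ) : ℂ)))
          ∂((volume : Measure (EuclideanSpace ℝ (Fin 3))).toSphere)) = Φ v (v - v_ast) := by
      intro v_ast
      rw [step_sphere f b lam ζ G hG v v_ast]
      rw [hΦ]
      simp only [sub_sub_cancel]
    rw [integral_congr_ae (Filter.Eventually.of_forall e1)]
    exact integral_sub_left_eq_self (Φ v) volume v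
  rw [integral_congr_ae (Filter.Eventually.of_forall step1)]
  have hint := aux_prod_integrable f b hb_meas hb hlam₁ hlam₂ ζ G hG
  have swap : (∫ v : EuclideanSpace ℝ (Fin 3), ∫ u : EuclideanSpace ℝ (Fin 3), Φ v u) =
      ∫ u : EuclideanSpace ℝ (Fin 3), ∫ v : EuclideanSpace ℝ (Fin 3), Φ v u :=
    integral_integral_swap hint
  rw [swap, ← MeasureTheory.integral_const_mul]
  refine integral_congr_ae (Filter.Eventually.of_forall fun u => ?_)
  have : (∫ v : EuclideanSpace ℝ (Fin 3), Φ v u) =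
      (∫ v : EuclideanSpace ℝ (Fin 3),
        f v * f (v - u) * Complex.exp (-Complex.I * ((⟪ζ, v⟫ : ℝ) : ℂ))) * G u ζ := by
    rw [hΦ]
    exact MeasureTheory.integral_mul_const _ _
  simp only
  rw [this]
  ring
end
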